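/- If a mapping f : [0, ∞) → [0, ∞) is monotonically increasing, scalable (for all α > 1 and x ≥ 0, α f(x) > f(αx)), and there exists x₀ ≥ 0 with x₀ ≥ f(x₀), then f has a unique fixed point in [0, ∞). -/
import Mathlib


theorem standard_function_unique_fixed_point (f : ℝ → ℝ)
    (hmap : ∀ x : ℝ, 0 ≤ x → 0 ≤ f x)
    (hmono : ∀ x x' : ℝ, 0 ≤ x' → x' ≤ x → f x' ≤ f x)
    (hscal : ∀ α x : ℝ, 1 < α → 0 ≤ x → f (α * x) < α * f x)
    (hex : ∃ x₀ : ℝ, 0 ≤ x₀ ∧ f x₀ ≤ x₀) :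
    ∃! x : ℝ, 0 ≤ x ∧ f x = x := by
  -- f 0 > 0
  have hf0 : 0 < f 0 := by
    have := hscal 2 0 (by norm_num) le_rfl
    rw [mul_zero] at this
    linarith
  obtain ⟨x₀, hx₀, hfx₀⟩ := hex
  set S : Set ℝ := {x | 0 ≤ x ∧ f x ≤ x} with hS
  have hne : S.Nonempty := ⟨x₀, hx₀, hfx₀⟩
  have hbdd : BddBelow S := ⟨0, fun x hx => hx.1⟩
  set c : ℝ := sInf S with hc
  have hc0 : 0 ≤ c := le_csInf hne fun x hx => hx.1
  -- f c ≤ c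
  have hfc : f c ≤ c := by
    apply le_csInf hne
    intro x hx
    exact le_trans (hmono x c hc0 (csInf_le hbdd hx)) hx.2
  -- c ≤ f c since f c ∈ S
  have hcf : c ≤ f c := by
    apply csInf_le hbdd
    exact ⟨hmap c hc0, hmono c (f c) (hmap c hc0) hfc⟩
  have hfix : f c = c := le_antisymm hfc hcf
  refine ⟨c, ⟨hc0, hfix⟩, ?_⟩
  -- uniqueness
  have key : ∀ y : ℝ, 0 ≤ y → f y = y → ∀ z : ℝ, 0 ≤ z → f z = z → y ≤ z → y = z := by
    intro y hy hfy z hz hfz hyz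
    by_contra hne'
    have hlt : y < z := lt_of_le_of_ne hyz hne'
    have hypos : 0 < y := by
      have := hmono y 0 le_rfl hy
      linarith
    have hα : 1 < z / y := (one_lt_div hypos).mpr hlt
    have := hscal (z / y) y hα hy
    rw [div_mul_cancel₀ _ (ne_of_gt hypos), hfz, hfy, div_mul_cancel₀ _ (ne_of_gt hypos)] at this
    exact lt_irrefl z this
  intro y ⟨hy, hfy⟩
  rcases le_total y c with h | h
  · exact key y hy hfy c hc0 hfix h
  · exact (key c hc0 hfix y hy hfy h).symm
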